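/- For every nonnegative integer n, Q_2(n) and b_4(n) have the same parity, where Q_2(n) counts partitions of n into distinct parts not congruent to 2 mod 4 and b_4(n) counts 4-regular partitions of n. -/

import Mathlib

/-- `Q2 n`: number of partitions of `n` into distinct parts none ≡ 2 (mod 4). -/
noncomputable def Q2 (n : ℕ) : ℕ :=
  Nat.card {p : n.Partition // p.parts.Nodup ∧ ∀ x ∈ p.parts, x % 4 ≠ 2}

/-- `b4 n`: number of 4-regular partitions of `n` (no part divisible by 4). -/
noncomputable def b4 (n : ℕ) : ℕ :=
  Nat.card {p : n.Partition // ∀ x ∈ p.parts, ¬ (4 ∣ x)}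

open PowerSeries
namespace StmtAux
noncomputable section
variable {α : Type*}
open Finset
open scoped Classical



/-- The partial product for the generating function for odd partitions.
TODO: As `m` tends to infinity, this converges (in the `X`-adic topology).

If `m` is sufficiently large, the `i`th coefficient gives the number of odd partitions of the
natural number `i`: proved in `oddGF_prop`.
It is stated for an arbitrary field `α`, though it usually suffices to use `ℚ` or `ℝ`.
-/
def partialOddGF (m : ℕ) [Field α] :=
  ∏ i ∈ range m, (1 - (X : PowerSeries α) ^ (2 * i + 1))⁻¹

/-- The partial product for the generating function for distinct partitions.
TODO: As `m` tends to infinity, this converges (in the `X`-adic topology).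

If `m` is sufficiently large, the `i`th coefficient gives the number of distinct partitions of the
natural number `i`: proved in `distinctGF_prop`.
It is stated for an arbitrary commutative semiring `α`, though it usually suffices to use `ℕ`, `ℚ`
or `ℝ`.
-/
def partialDistinctGF (m : ℕ) [CommSemiring α] :=
  ∏ i ∈ range m, (1 + (X : PowerSeries α) ^ (i + 1))

open Finset.HasAntidiagonal

universe u
variable {ι : Type u}

/-- A convenience constructor for the power series whose coefficients indicate a subset. -/
def indicatorSeries (α : Type*) [Semiring α] (s : Set ℕ) : PowerSeries α :=
  PowerSeries.mk fun n => if n ∈ s then 1 else 0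

theorem coeff_indicator (s : Set ℕ) [Semiring α] (n : ℕ) :
    coeff n (indicatorSeries α s) = if n ∈ s then 1 else 0 :=
  coeff_mk _ _

theorem coeff_indicator_pos (s : Set ℕ) [Semiring α] (n : ℕ) (h : n ∈ s) :
    coeff n (indicatorSeries α s) = 1 := by rw [coeff_indicator, if_pos h]

theorem coeff_indicator_neg (s : Set ℕ) [Semiring α] (n : ℕ) (h : n ∉ s) :
    coeff n (indicatorSeries α s) = 0 := by rw [coeff_indicator, if_neg h]

theorem constantCoeff_indicator (s : Set ℕ) [Semiring α] :
    constantCoeff (indicatorSeries α s) = if 0 ∈ s then 1 else 0 :=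
  rfl

theorem two_series (i : ℕ) [Semiring α] :
    1 + (X : PowerSeries α) ^ i.succ = indicatorSeries α {0, i.succ} := by
  ext n
  simp only [coeff_indicator, coeff_one, coeff_X_pow, Set.mem_insert_iff, Set.mem_singleton_iff,
    map_add]
  cases' n with d
  · simp [(Nat.succ_ne_zero i).symm]
  · simp [Nat.succ_ne_zero d]

theorem num_series' [Field α] (i : ℕ) :
    (1 - (X : PowerSeries α) ^ (i + 1))⁻¹ = indicatorSeries α {k | i + 1 ∣ k} := by
  rw [PowerSeries.inv_eq_iff_mul_eq_one]
  · ext n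
    cases n with
    | zero => simp [mul_sub, zero_pow, constantCoeff_indicator]
    | succ n =>
      simp only [coeff_one, if_false, mul_sub, mul_one, coeff_indicator,
        LinearMap.map_sub, reduceCtorEq]
      simp_rw [coeff_mul, coeff_X_pow, coeff_indicator, @boole_mul _ _ _ _]
      erw [@sum_ite _ _ _ _ (fun x : ℕ × ℕ => x.1 ∈ {k | i + 1 ∣ k}) (fun _ => Classical.propDecidable _), sum_ite]
      simp_rw [@filter_filter _ _ _ _ _, sum_const_zero, add_zero, sum_const, nsmul_eq_mul, mul_one,
        sub_eq_iff_eq_add, zero_add]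
      symm
      split_ifs with h
      · suffices #{a ∈ antidiagonal (n + 1) | i + 1 ∣ a.fst ∧ a.snd = i + 1} = 1 by
          simp only [Set.mem_setOf_eq]; convert congr_arg ((↑) : ℕ → α) this; norm_cast
        rw [card_eq_one]
        cases' h with p hp
        refine ⟨((i + 1) * (p - 1), i + 1), ?_⟩
        ext ⟨a₁, a₂⟩
        simp only [mem_filter, Prod.mk_inj, HasAntidiagonal.mem_antidiagonal, mem_singleton]
        constructor
        · rintro ⟨a_left, ⟨a, rfl⟩, rfl⟩
          refine ⟨?_, rfl⟩
          rw [Nat.mul_sub_left_distrib, ← hp, ← a_left, mul_one, Nat.add_sub_cancel]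
        · rintro ⟨rfl, rfl⟩
          match p with
          | 0 => rw [mul_zero] at hp; cases hp
          | p + 1 => rw [hp]; simp [mul_add]
      · suffices #{a ∈ antidiagonal (n + 1) | i + 1 ∣ a.fst ∧ a.snd = i + 1} = 0 by
          simp only [Set.mem_setOf_eq]; convert congr_arg ((↑) : ℕ → α) this; norm_cast
        rw [card_eq_zero]
        apply eq_empty_of_forall_notMem
        simp only [Prod.forall, mem_filter, not_and, HasAntidiagonal.mem_antidiagonal]
        rintro _ h₁ h₂ ⟨a, rfl⟩ rfl
        apply h
        simp [← h₂]
  · simp [zero_pow]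

def mkOdd : ℕ ↪ ℕ :=
  ⟨fun i => 2 * i + 1, fun x y h => by linarith⟩

-- The main workhorse of the partition theorem proof.
theorem partialGF_prop (α : Type*) [CommSemiring α] (n : ℕ) (s : Finset ℕ) (hs : ∀ i ∈ s, 0 < i)
    (c : ℕ → Set ℕ) (hc : ∀ i, i ∉ s → 0 ∈ c i) :
    #{p : n.Partition | (∀ j, p.parts.count j ∈ c j) ∧ ∀ j ∈ p.parts, j ∈ s} =
      coeff n (∏ i ∈ s, indicatorSeries α ((· * i) '' c i)) := by
  simp_rw [coeff_prod, coeff_indicator, prod_boole, sum_boole]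
  apply congr_arg
  simp only [mem_univ, forall_true_left, not_and, not_forall, exists_prop,
    Set.mem_image, not_exists]
  set φ : (a : Nat.Partition n) →
    a ∈ filter (fun p ↦ (∀ (j : ℕ), Multiset.count j p.parts ∈ c j) ∧ ∀ j ∈ p.parts, j ∈ s) univ →
    ℕ →₀ ℕ := fun p _ => {
      toFun := fun i => Multiset.count i p.parts • i
      support := Finset.filter (fun i => i ≠ 0) p.parts.toFinset
      mem_support_toFun := fun a => by
        simp only [smul_eq_mul, ne_eq, mul_eq_zero, Multiset.count_eq_zero]
        rw [not_or, not_not]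
        simp only [Multiset.mem_toFinset, not_not, mem_filter] }
  refine Finset.card_bij φ ?_ ?_ ?_
  · intro a ha
    simp only [φ, not_forall, not_exists, not_and, exists_prop, mem_filter]
    rw [mem_finsuppAntidiag]
    dsimp only [ne_eq, smul_eq_mul, id_eq, eq_mpr_eq_cast, le_eq_subset, Finsupp.coe_mk]
    simp only [mem_univ, forall_true_left, not_and, not_forall, exists_prop,
      mem_filter, true_and] at ha
    refine ⟨⟨?_, fun i ↦ ?_⟩, fun i _ ↦ ⟨a.parts.count i, ha.1 i, rfl⟩⟩
    · conv_rhs => simp [← a.parts_sum]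
      rw [sum_multiset_count_of_subset _ s]
      · simp only [smul_eq_mul]
      · intro i
        simp only [Multiset.mem_toFinset, not_not, mem_filter]
        apply ha.2
    · simp only [ne_eq, Multiset.mem_toFinset, not_not, mem_filter, and_imp]
      exact fun hi _ ↦ ha.2 i hi
  · intro p₁ hp₁ p₂ hp₂ h
    apply Nat.Partition.ext
    simp only [true_and, mem_univ, mem_filter] at hp₁ hp₂
    ext i
    simp only [φ, ne_eq, Multiset.mem_toFinset, not_not, smul_eq_mul, Finsupp.mk.injEq] at h
    by_cases hi : i = 0
    · rw [hi]
      rw [Multiset.count_eq_zero_of_notMem]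
      · rw [Multiset.count_eq_zero_of_notMem]
        intro a; exact Nat.lt_irrefl 0 (hs 0 (hp₂.2 0 a))
      intro a; exact Nat.lt_irrefl 0 (hs 0 (hp₁.2 0 a))
    · rw [← mul_left_inj' hi]
      rw [funext_iff] at h
      exact h.2 i
  · simp only [φ, mem_filter, mem_finsuppAntidiag, mem_univ, exists_prop, true_and, and_assoc]
    rintro f ⟨hf, hf₃, hf₄⟩
    have hf' : f ∈ finsuppAntidiag s n := mem_finsuppAntidiag.mpr ⟨hf, hf₃⟩
    simp only [mem_finsuppAntidiag] at hf'
    refine ⟨⟨∑ i ∈ s, Multiset.replicate (f i / i) i, ?_, ?_⟩, ?_, ?_, ?_⟩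
    · intro i hi
      simp only [exists_prop, Multiset.mem_sum, mem_map, Function.Embedding.coeFn_mk] at hi
      rcases hi with ⟨t, ht, z⟩
      apply hs
      rwa [Multiset.eq_of_mem_replicate z]
    · simp_rw [Multiset.sum_sum, Multiset.sum_replicate, Nat.nsmul_eq_mul]
      rw [← hf'.1]
      refine sum_congr rfl fun i hi => Nat.div_mul_cancel ?_
      rcases hf₄ i hi with ⟨w, _, hw₂⟩
      rw [← hw₂]
      exact dvd_mul_left _ _
    · intro i
      simp_rw [Multiset.count_sum', Multiset.count_replicate, sum_ite_eq']
      split_ifs with h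
      · rcases hf₄ i h with ⟨w, hw₁, hw₂⟩
        rwa [← hw₂, Nat.mul_div_cancel _ (hs i h)]
      · exact hc _ h
    · intro i hi
      rw [Multiset.mem_sum] at hi
      rcases hi with ⟨j, hj₁, hj₂⟩
      rwa [Multiset.eq_of_mem_replicate hj₂]
    · ext i
      simp_rw [Multiset.count_sum', Multiset.count_replicate, sum_ite_eq']
      simp only [ne_eq, Multiset.mem_toFinset, not_not, smul_eq_mul, ite_mul,
        zero_mul, Finsupp.coe_mk]
      split_ifs with h
      · apply Nat.div_mul_cancel
        rcases hf₄ i h with ⟨w, _, hw₂⟩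
        apply Dvd.intro_left _ hw₂
      · apply symm
        rw [← Finsupp.notMem_support_iff]
        exact notMem_mono hf'.2 h


/-! ### char 2 specific material -/

abbrev K := ZMod 2

def G (i : ℕ) : PowerSeries K := (1 - (X : PowerSeries K) ^ i)⁻¹

lemma G_eq (i : ℕ) (hi : i ≠ 0) : G i = indicatorSeries K {k | i ∣ k} := by
  obtain ⟨j, rfl⟩ := Nat.exists_eq_succ_of_ne_zero hi
  exact num_series' j

lemma G_mul (i : ℕ) (hi : i ≠ 0) : (1 - (X : PowerSeries K) ^ i) * G i = 1 := by
  apply PowerSeries.mul_inv_cancel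
  simp [zero_pow hi]

lemma isUnit_G (i : ℕ) (hi : i ≠ 0) : IsUnit (G i) :=
  IsUnit.of_mul_eq_one _ (by rw [mul_comm]; exact G_mul i hi)

lemma two_eq_zero : (2 : PowerSeries K) = 0 := by
  have h2 : (2 : K) = 0 := by decide
  calc (2 : PowerSeries K) = PowerSeries.C (2 : K) := (map_ofNat (PowerSeries.C (R := K)) 2).symm
    _ = 0 := by rw [h2, map_zero]

lemma add_self_eq_zero' (f : PowerSeries K) : f + f = 0 := by
  have : f + f = 2 * f := by ring
  rw [this, two_eq_zero, zero_mul]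

lemma sub_eq_add' (a b : PowerSeries K) : a - b = a + b := by
  rw [sub_eq_add_neg, neg_eq_of_add_eq_zero_left (add_self_eq_zero' b)]

lemma sq_one_sub (i : ℕ) :
    (1 - (X : PowerSeries K) ^ i) ^ 2 = 1 - (X : PowerSeries K) ^ (2 * i) := by
  rw [sub_eq_add' 1 (X ^ i), sub_eq_add' 1 (X ^ (2*i))]
  have h : (1 + (X : PowerSeries K) ^ i) ^ 2
      = 1 + (2 : PowerSeries K) * X ^ i + (X ^ i) ^ 2 := by ring
  rw [h, two_eq_zero, ← pow_mul, mul_comm i 2]; ring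

lemma G_sq (i : ℕ) (hi : i ≠ 0) : G i ^ 2 = G (2 * i) := by
  have h2i : 2 * i ≠ 0 := by omega
  calc G i ^ 2 = ((1 - (X : PowerSeries K) ^ (2 * i)) * G (2 * i)) * G i ^ 2 := by
        rw [G_mul _ h2i, one_mul]
    _ = G (2 * i) * (((1 - (X : PowerSeries K) ^ i) * G i) ^ 2) := by
        rw [← sq_one_sub]; ring
    _ = G (2 * i) := by rw [G_mul _ hi]; ring

/-! ### congruence mod X^(n+1) -/

def Cong (n : ℕ) (a b : PowerSeries K) : Prop := (X : PowerSeries K) ^ (n + 1) ∣ (a - b)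

lemma Cong.refl (n : ℕ) (a : PowerSeries K) : Cong n a a := by simp [Cong]

lemma Cong.symm {n : ℕ} {a b : PowerSeries K} (h : Cong n a b) : Cong n b a := by
  simpa [Cong] using (dvd_neg.2 h)

lemma Cong.trans {n : ℕ} {a b c : PowerSeries K} (h : Cong n a b) (h' : Cong n b c) :
    Cong n a c := by
  have := dvd_add h h'
  simpa [Cong] using this

lemma Cong.mul {n : ℕ} {a b c d : PowerSeries K} (h : Cong n a b) (h' : Cong n c d) :
    Cong n (a * c) (b * d) := by
  have : a * c - b * d = a * (c - d) + (a - b) * d := by ring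
  rw [Cong, this]
  exact dvd_add (Dvd.dvd.mul_left h' a) (Dvd.dvd.mul_right h d)

lemma Cong.prod_one {n : ℕ} {s : Finset ℕ} {f : ℕ → PowerSeries K}
    (h : ∀ i ∈ s, Cong n (f i) 1) : Cong n (∏ i ∈ s, f i) 1 := by
  classical
  induction s using Finset.induction with
  | empty => simpa using Cong.refl n 1
  | @insert a s' hx ih =>
    rw [Finset.prod_insert hx]
    have := (h a (Finset.mem_insert_self a s')).mul
      (ih (fun i hi => h i (Finset.mem_insert_of_mem hi)))
    simpa using this

lemma Cong.prod_subset {n : ℕ} {s t : Finset ℕ} {f : ℕ → PowerSeries K} (hst : s ⊆ t)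
    (h : ∀ i ∈ t, i ∉ s → Cong n (f i) 1) : Cong n (∏ i ∈ t, f i) (∏ i ∈ s, f i) := by
  rw [← Finset.prod_sdiff hst]
  have h1 : Cong n (∏ i ∈ t \ s, f i) 1 := by
    apply Cong.prod_one
    intro i hi
    rw [Finset.mem_sdiff] at hi
    exact h i hi.1 hi.2
  simpa using h1.mul (Cong.refl n (∏ i ∈ s, f i))

lemma G_cong_one {n i : ℕ} (hi : n < i) : Cong n (G i) 1 := by
  rw [Cong, PowerSeries.X_pow_dvd_iff]
  intro m hm
  rw [map_sub, G_eq i (by omega), coeff_indicator]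
  rcases Nat.eq_zero_or_pos m with rfl | hm0
  · simp
  · rw [if_neg, PowerSeries.coeff_one, if_neg (by omega)]
    · ring
    · intro hd
      have := Nat.le_of_dvd hm0 hd
      omega

/-! ### the finsets -/

def sOdd (n : ℕ) : Finset ℕ := (Finset.Icc 1 n).filter (fun i => i % 2 = 1)
def sEven (n : ℕ) : Finset ℕ := (Finset.Icc 1 n).filter (fun i => i % 2 = 0)
def s1 (n : ℕ) : Finset ℕ := (Finset.Icc 1 n).filter (fun i => i % 4 ≠ 2)
def s2 (n : ℕ) : Finset ℕ := (Finset.Icc 1 n).filter (fun i => ¬ (4 ∣ i))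

def T (n k : ℕ) : PowerSeries K := ∏ i ∈ sOdd n, G (2 ^ k * i)
def F (n k : ℕ) : PowerSeries K := ∏ i ∈ Finset.Icc 1 n, G (2 ^ k * i)

lemma even_prod (n c : ℕ) (hc : c ≠ 0) :
    Cong n (∏ i ∈ Finset.Icc 1 n, G ((2 * c) * i)) (∏ i ∈ sEven n, G (c * i)) := by
  have himg : sEven n = (Finset.Icc 1 (n / 2)).image (fun j => 2 * j) := by
    ext i
    simp only [sEven, Finset.mem_filter, Finset.mem_Icc, Finset.mem_image]
    constructor
    · rintro ⟨⟨h1, h2⟩, h3⟩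
      exact ⟨i / 2, by omega, by omega⟩
    · rintro ⟨j, hj, rfl⟩
      omega
  rw [himg, Finset.prod_image (by intro a _ b _ h; have h' : 2 * a = 2 * b := h; omega)]
  have : ∀ j ∈ Finset.Icc 1 (n / 2), G (c * (2 * j)) = G ((2 * c) * j) := by
    intro j _; ring_nf
  rw [Finset.prod_congr rfl this]
  apply Cong.prod_subset
  · apply Finset.Icc_subset_Icc_right; omega
  · intro i hi hni
    simp only [Finset.mem_Icc] at hi hni
    apply G_cong_one
    have hb : 2 * i ≤ (2 * c) * i := Nat.mul_le_mul_right i (by omega)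
    omega

lemma TF_cong (n : ℕ) : ∀ d k, n < 2 ^ (k + d) → Cong n (T n k ^ 2 * F n (k + 1)) 1 := by
  intro d
  induction d with
  | zero =>
    intro k hk
    rw [Nat.add_zero] at hk
    have hT : Cong n (T n k) 1 := by
      apply Cong.prod_one
      intro i hi
      simp only [sOdd, Finset.mem_filter, Finset.mem_Icc] at hi
      apply G_cong_one
      have h1 : 2 ^ k ≤ 2 ^ k * i := Nat.le_mul_of_pos_right _ (by omega)
      omega
    have hF : Cong n (F n (k + 1)) 1 := by
      apply Cong.prod_one
      intro i hi
      simp only [Finset.mem_Icc] at hi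
      apply G_cong_one
      have h1 : 2 ^ (k + 1) ≤ 2 ^ (k + 1) * i := Nat.le_mul_of_pos_right _ (by omega)
      have h2 : 2 ^ k ≤ 2 ^ (k + 1) := Nat.pow_le_pow_right (by omega) (by omega)
      omega
    have := (hT.mul hT).mul hF
    simpa [sq] using this
  | succ d ih =>
    intro k hk
    have hTsq : T n k ^ 2 = T n (k + 1) := by
      rw [T, ← Finset.prod_pow]
      apply Finset.prod_congr rfl
      intro i hi
      simp only [sOdd, Finset.mem_filter, Finset.mem_Icc] at hi
      rw [G_sq _ (Nat.mul_ne_zero (by positivity) (by omega)), ← mul_assoc, ← pow_succ']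
    have hse : (Finset.Icc 1 n).filter (fun i => ¬ i % 2 = 1) = sEven n := by
      ext i
      simp only [sEven, Finset.mem_filter, Finset.mem_Icc]
      omega
    have hsplit : F n (k + 1) = T n (k + 1) * ∏ i ∈ sEven n, G (2 ^ (k + 1) * i) := by
      rw [F, ← Finset.prod_filter_mul_prod_filter_not (Finset.Icc 1 n) (fun i => i % 2 = 1)
        (fun i => G (2 ^ (k + 1) * i)), hse]
      rfl
    have hEv : Cong n (∏ i ∈ sEven n, G (2 ^ (k + 1) * i)) (F n (k + 2)) := by
      have := even_prod n (2 ^ (k + 1)) (by positivity)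
      have h2 : 2 * 2 ^ (k + 1) = 2 ^ (k + 2) := by ring
      rw [h2] at this
      exact this.symm
    have ihk : Cong n (T n (k + 1) ^ 2 * F n (k + 2)) 1 := by
      apply ih (k + 1)
      have : k + 1 + d = k + (d + 1) := by omega
      rw [this]; exact hk
    have e1 : T n k ^ 2 * F n (k + 1)
        = T n (k + 1) ^ 2 * ∏ i ∈ sEven n, G (2 ^ (k + 1) * i) := by
      rw [hTsq, hsplit]; ring
    rw [e1]
    exact ((Cong.refl n (T n (k + 1) ^ 2)).mul hEv).trans ihk

/-! ### counting side -/

lemma ind01 (i : ℕ) (hi : i ≠ 0) :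
    indicatorSeries K {0, i} = 1 - (X : PowerSeries K) ^ i := by
  rw [sub_eq_add']
  ext m
  simp only [coeff_indicator, map_add, PowerSeries.coeff_one, PowerSeries.coeff_X_pow,
    Set.mem_insert_iff, Set.mem_singleton_iff]
  by_cases h0 : m = 0
  · subst h0; simp [Ne.symm hi]
  · simp [h0]

lemma parts_mem_Icc {n : ℕ} (p : n.Partition) {j : ℕ} (hj : j ∈ p.parts) :
    1 ≤ j ∧ j ≤ n := by
  refine ⟨p.parts_pos hj, ?_⟩
  simpa [p.parts_sum] using Multiset.single_le_sum (fun _ _ => Nat.zero_le _) _ hj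

lemma Q2_eq_coeff (n : ℕ) :
    (Q2 n : K) = coeff n (∏ i ∈ s1 n, (1 - (X : PowerSeries K) ^ i)) := by
  have hs : ∀ i ∈ s1 n, 0 < i := by
    intro i hi
    simp only [s1, Finset.mem_filter, Finset.mem_Icc] at hi
    omega
  have hgf := partialGF_prop K n (s1 n) hs (fun _ => {0, 1}) (fun _ _ => Or.inl rfl)
  have hprod : (∏ i ∈ s1 n, indicatorSeries K ((· * i) '' {0, 1}))
      = ∏ i ∈ s1 n, (1 - (X : PowerSeries K) ^ i) := by
    apply Finset.prod_congr rfl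
    intro i hi
    have himg : ((· * i) '' {0, 1} : Set ℕ) = {0, i} := by
      rw [Set.image_pair]; simp
    rw [himg, ind01 i (by have := hs i hi; omega)]
  rw [hprod] at hgf
  rw [← hgf]
  congr 1
  rw [Q2, Nat.card_eq_fintype_card, Fintype.card_subtype]
  congr 1
  apply Finset.filter_congr
  intro p _
  constructor
  · rintro ⟨h1, h2⟩
    refine ⟨fun j => ?_, fun j hj => ?_⟩
    · have hc := Multiset.nodup_iff_count_le_one.1 h1 j
      simp only [Set.mem_insert_iff, Set.mem_singleton_iff]
      omega
    · have hm := parts_mem_Icc p hj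
      simp only [s1, Finset.mem_filter, Finset.mem_Icc]
      exact ⟨⟨hm.1, hm.2⟩, h2 j hj⟩
  · rintro ⟨h1, h2⟩
    constructor
    · rw [Multiset.nodup_iff_count_le_one]
      intro j
      have := h1 j
      simp only [Set.mem_insert_iff, Set.mem_singleton_iff] at this
      omega
    · intro x hx
      have := h2 x hx
      simp only [s1, Finset.mem_filter] at this
      exact this.2

lemma b4_eq_coeff (n : ℕ) : (b4 n : K) = coeff n (∏ i ∈ s2 n, G i) := by
  have hs : ∀ i ∈ s2 n, 0 < i := by
    intro i hi
    simp only [s2, Finset.mem_filter, Finset.mem_Icc] at hi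
    omega
  have hgf := partialGF_prop K n (s2 n) hs (fun _ => Set.univ) (fun _ _ => trivial)
  have hprod : (∏ i ∈ s2 n, indicatorSeries K ((· * i) '' Set.univ))
      = ∏ i ∈ s2 n, G i := by
    apply Finset.prod_congr rfl
    intro i hi
    have himg : ((· * i) '' Set.univ : Set ℕ) = {k | i ∣ k} := by
      ext k
      simp only [Set.image_univ, Set.mem_range, Set.mem_setOf_eq]
      constructor
      · rintro ⟨x, rfl⟩; exact Dvd.intro_left x rfl
      · rintro ⟨c, rfl⟩; exact ⟨c, by ring⟩
    rw [himg, G_eq i (by have := hs i hi; omega)]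
  rw [hprod] at hgf
  rw [← hgf]
  congr 1
  rw [b4, Nat.card_eq_fintype_card, Fintype.card_subtype]
  congr 1
  apply Finset.filter_congr
  intro p _
  constructor
  · intro h
    refine ⟨fun _ => trivial, fun j hj => ?_⟩
    have hm := parts_mem_Icc p hj
    simp only [s2, Finset.mem_filter, Finset.mem_Icc]
    exact ⟨⟨hm.1, hm.2⟩, h j hj⟩
  · rintro ⟨-, h2⟩ x hx
    have := h2 x hx
    simp only [s2, Finset.mem_filter] at this
    exact this.2

/-! ### the main power series congruence -/

lemma coeff_eq (n : ℕ) :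
    coeff n (∏ i ∈ s1 n, (1 - (X : PowerSeries K) ^ i))
      = coeff n (∏ i ∈ s2 n, G i) := by
  set P := ∏ i ∈ s1 n, (1 - (X : PowerSeries K) ^ i) with hP
  set Q := ∏ i ∈ s2 n, G i with hQ
  set M := ∏ i ∈ s1 n, G i with hM
  have hs1pos : ∀ i ∈ s1 n, i ≠ 0 := by
    intro i hi
    simp only [s1, Finset.mem_filter, Finset.mem_Icc] at hi
    omega
  have hPM : P * M = 1 := by
    rw [hP, hM, ← Finset.prod_mul_distrib,
      Finset.prod_congr rfl (fun i hi => G_mul i (hs1pos i hi)), Finset.prod_const_one]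
  have key : Q * M = ((∏ i ∈ sOdd n, G i) * ∏ i ∈ sOdd n, G i) * ∏ i ∈ sEven n, G i := by
    rw [hQ, hM, s2, s1, sOdd, sEven]
    simp only [Finset.prod_filter]
    rw [← Finset.prod_mul_distrib, ← Finset.prod_mul_distrib, ← Finset.prod_mul_distrib]
    apply Finset.prod_congr rfl
    intro i _
    have h2 : i % 2 = i % 4 % 2 := (Nat.mod_mod_of_dvd i (by norm_num)).symm
    have hd : (4 ∣ i) ↔ i % 4 = 0 := Nat.dvd_iff_mod_eq_zero
    rcases (by omega : i % 4 = 0 ∨ i % 4 = 1 ∨ i % 4 = 2 ∨ i % 4 = 3) with h | h | h | h <;>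
      simp [h, hd, h2]
  have hT0 : T n 0 = ∏ i ∈ sOdd n, G i := by
    rw [T]
    exact Finset.prod_congr rfl (fun i _ => by rw [pow_zero, one_mul])
  have hEv : Cong n (∏ i ∈ sEven n, G i) (F n 1) := by
    have h1 : (∏ i ∈ sEven n, G i) = ∏ i ∈ sEven n, G (1 * i) :=
      Finset.prod_congr rfl (fun i _ => by rw [one_mul])
    have h2 : F n 1 = ∏ i ∈ Finset.Icc 1 n, G ((2 * 1) * i) := by
      rw [F]
      exact Finset.prod_congr rfl (fun i _ => by norm_num)
    rw [h1, h2]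
    exact (even_prod n 1 one_ne_zero).symm
  have hQM : Cong n (Q * M) 1 := by
    rw [key]
    have step1 : Cong n (((∏ i ∈ sOdd n, G i) * ∏ i ∈ sOdd n, G i) * ∏ i ∈ sEven n, G i)
        (T n 0 ^ 2 * F n 1) := by
      rw [hT0, sq]
      exact (Cong.refl n _).mul hEv
    have step2 : Cong n (T n 0 ^ 2 * F n 1) 1 := by
      apply TF_cong n (n + 1) 0
      rw [Nat.zero_add]
      exact lt_of_lt_of_le (Nat.lt_two_pow_self (n := n)) (Nat.pow_le_pow_right (by omega) (by omega))
    exact step1.trans step2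
  have h1 : Cong n P Q := by
    have hd : (X : PowerSeries K) ^ (n + 1) ∣ (P - Q) * M := by
      have : (P - Q) * M = P * M - Q * M := by ring
      rw [this, hPM]
      exact (hQM.symm : Cong n 1 (Q * M))
    have : (X : PowerSeries K) ^ (n + 1) ∣ ((P - Q) * M) * P := hd.mul_right P
    have hMP : ((P - Q) * M) * P = P - Q := by
      have : ((P - Q) * M) * P = (P - Q) * (P * M) := by ring
      rw [this, hPM, mul_one]
    rwa [hMP] at this
  rw [Cong, PowerSeries.X_pow_dvd_iff] at h1
  have := h1 n (by omega)
  rw [map_sub, sub_eq_zero] at this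
  exact this

end
end StmtAux

theorem stmt_3 (n : ℕ) : Q2 n % 2 = b4 n % 2 := by
  have h : ((Q2 n : ℕ) : ZMod 2) = ((b4 n : ℕ) : ZMod 2) := by
    rw [show ((Q2 n : ℕ) : ZMod 2) = (Q2 n : StmtAux.K) from rfl,
      show ((b4 n : ℕ) : ZMod 2) = (b4 n : StmtAux.K) from rfl,
      StmtAux.Q2_eq_coeff, StmtAux.b4_eq_coeff, StmtAux.coeff_eq]
  exact (ZMod.natCast_eq_natCast_iff' _ _ _).1 h
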